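/- For every integer d ≥ 2, the quantity C(2d, d) + Σ_{i=1}^{d} C(2d, 2i)·C(2d-2i, d-i) - 2d·C(2d, d) + C(2d, 2) is strictly positive. -/

import Mathlib

theorem stmt_7 (d : ℕ) (hd : 2 ≤ d) :
    0 < (Nat.choose (2 * d) d : ℤ)
        + ∑ i ∈ Finset.Icc 1 d, (Nat.choose (2 * d) (2 * i) : ℤ) * (Nat.choose (2 * d - 2 * i) (d - i) : ℤ)
        - 2 * (d : ℤ) * (Nat.choose (2 * d) d : ℤ) + (Nat.choose (2 * d) 2 : ℤ) := by
  rcases Nat.lt_or_ge d 5 with h | h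
  · interval_cases d <;> decide
  · obtain ⟨e, rfl⟩ : ∃ e, d = e + 2 := ⟨d - 2, by omega⟩
    have he : 3 ≤ e := by omega
    -- key bound: C(2d,d) ≤ 4 * C(2e+2, e+1)
    have key : Nat.choose (2 * (e + 2)) (e + 2) ≤ 4 * Nat.choose (2 * e + 2) (e + 1) := by
      have h1 : Nat.choose (2 * (e + 2)) (e + 2)
          = Nat.choose (2 * e + 3) (e + 1) + Nat.choose (2 * e + 3) (e + 2) := by
        have h2 : 2 * (e + 2) = (2 * e + 3) + 1 := by ring
        rw [h2]
        exact Nat.choose_succ_succ (2 * e + 3) (e + 1)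
      have h3 : Nat.choose (2 * e + 3) (e + 2) = Nat.choose (2 * e + 3) (e + 1) := by
        have := Nat.choose_symm (show e + 2 ≤ 2 * e + 3 by omega)
        have h4 : 2 * e + 3 - (e + 2) = e + 1 := by omega
        rw [h4] at this
        exact this.symm
      have h5 : Nat.choose (2 * e + 3) (e + 1)
          = Nat.choose (2 * e + 2) e + Nat.choose (2 * e + 2) (e + 1) := by
        exact Nat.choose_succ_succ (2 * e + 2) e
      have h6 : Nat.choose (2 * e + 2) e ≤ Nat.choose (2 * e + 2) (e + 1) := by
        have := Nat.choose_le_middle e (2 * e + 2)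
        have h7 : (2 * e + 2) / 2 = e + 1 := by omega
        rwa [h7] at this
      omega
    set N : ℤ := (Nat.choose (2 * e + 2) (e + 1) : ℤ) with hN
    have hNnn : 0 ≤ N := by positivity
    have keyZ : (Nat.choose (2 * (e + 2)) (e + 2) : ℤ) ≤ 4 * N := by rw [hN]; exact_mod_cast key
    have hC2 : (Nat.choose (2 * (e + 2)) 2 : ℤ) = ((e : ℤ) + 2) * (2 * e + 3) := by
      have h8 : Nat.choose (2 * (e + 2)) 2 = (e + 2) * (2 * e + 3) := by
        rw [Nat.choose_two_right]
        have h9 : 2 * (e + 2) - 1 = 2 * e + 3 := by omega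
        rw [h9]
        have h10 : 2 * (e + 2) * (2 * e + 3) = ((e + 2) * (2 * e + 3)) * 2 := by ring
        rw [h10, Nat.mul_div_cancel _ (by norm_num)]
      exact_mod_cast h8
    -- the i = 1 term
    have hterm : (Nat.choose (2 * (e + 2)) 2 : ℤ) * N
        ≤ ∑ i ∈ Finset.Icc 1 (e + 2), (Nat.choose (2 * (e + 2)) (2 * i) : ℤ)
            * (Nat.choose (2 * (e + 2) - 2 * i) (e + 2 - i) : ℤ) := by
      have hmem : 1 ∈ Finset.Icc 1 (e + 2) := by simp
      have := Finset.single_le_sum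
        (f := fun i => (Nat.choose (2 * (e + 2)) (2 * i) : ℤ)
            * (Nat.choose (2 * (e + 2) - 2 * i) (e + 2 - i) : ℤ))
        (fun i _ => by positivity) hmem
      simpa [show 2 * (e + 2) - 2 = 2 * e + 2 by omega, hN] using this
    have hA : (0 : ℤ) ≤ (Nat.choose (2 * (e + 2)) (e + 2) : ℤ) := by positivity
    have heZ : (3 : ℤ) ≤ (e : ℤ) := by exact_mod_cast he
    set A : ℤ := (Nat.choose (2 * (e + 2)) (e + 2) : ℤ) with hAdef
    have h1 : (0 : ℤ) ≤ ((e : ℤ) + 2) * (4 * N - A) :=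
      mul_nonneg (by linarith) (by linarith)
    have h2 : (0 : ℤ) ≤ (2 * (e : ℤ) - 5) * (((e : ℤ) + 2) * N) :=
      mul_nonneg (by linarith) (mul_nonneg (by linarith) hNnn)
    have hfinal : 2 * ((e : ℤ) + 2) * A ≤ ((e : ℤ) + 2) * (2 * (e : ℤ) + 3) * N := by nlinarith [h1, h2]
    have hC2pos : (0 : ℤ) < (Nat.choose (2 * (e + 2)) 2 : ℤ) := by
      rw [hC2]; nlinarith
    have hSum : ((e : ℤ) + 2) * (2 * (e : ℤ) + 3) * N
        ≤ ∑ i ∈ Finset.Icc 1 (e + 2), (Nat.choose (2 * (e + 2)) (2 * i) : ℤ)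
            * (Nat.choose (2 * (e + 2) - 2 * i) (e + 2 - i) : ℤ) := by
      calc ((e : ℤ) + 2) * (2 * (e : ℤ) + 3) * N = (Nat.choose (2 * (e + 2)) 2 : ℤ) * N := by rw [hC2]
        _ ≤ _ := hterm
    push_cast
    linarith [hSum, hfinal, hC2pos, hA]
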